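/- If f, g : [a,b] → ℝ with a, b ∈ [0,∞), a < b, g and f·g integrable on [a,b], f convex and nonnegative on [a,b], and g is s-convex in the second sense on [a,b] for some fixed s ∈ (0,1), then (1/(b-a)) ∫_a^b f(x)g(x) dx ≤ (1/(s+2))·(f(a)g(a)+f(b)g(b)) + (1/((s+1)(s+2)))·(f(a)g(b)+f(b)g(a)). -/

import Mathlib

open MeasureTheory Set

-- auxiliary: rpow identities for nonneg base
lemma mul_rpow_self {t s : ℝ} (ht : 0 ≤ t) (hs : 0 < s) :
    t * t ^ s = t ^ (s + 1) := by
  rcases eq_or_lt_of_le ht with h | h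
  · rw [← h, Real.zero_rpow hs.ne', Real.zero_rpow (by linarith), mul_zero]
  · rw [Real.rpow_add h, Real.rpow_one]; ring

lemma integral_rpow01 {r : ℝ} (hr : 0 < r) :
    ∫ t in (0:ℝ)..1, t ^ r = 1 / (r + 1) := by
  rw [integral_rpow (Or.inl (by linarith))]
  rw [Real.one_rpow, Real.zero_rpow (by linarith)]
  ring

lemma integral_one_sub_rpow01 {r : ℝ} (hr : 0 < r) :
    ∫ t in (0:ℝ)..1, (1 - t) ^ r = 1 / (r + 1) := by
  rw [intervalIntegral.integral_comp_sub_left (fun x => x ^ r) 1]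
  norm_num [integral_rpow01 hr]

theorem product_hadamard_convex_sconvex
    (a b s : ℝ) (f g : ℝ → ℝ)
    (ha : 0 ≤ a) (hb : 0 ≤ b) (hab : a < b)
    (hs : s ∈ Set.Ioo (0:ℝ) 1)
    (hg : IntervalIntegrable g volume a b)
    (hfg : IntervalIntegrable (fun x => f x * g x) volume a b)
    (hf : ConvexOn ℝ (Set.Icc a b) f)
    (hf0 : ∀ x ∈ Set.Icc a b, 0 ≤ f x)
    (hgs : ∀ x ∈ Set.Icc a b, ∀ y ∈ Set.Icc a b, ∀ l ∈ Set.Icc (0:ℝ) 1,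
      g (l * x + (1 - l) * y) ≤ l ^ s * g x + (1 - l) ^ s * g y) :
    (1 / (b - a)) * ∫ x in a..b, f x * g x ≤
      (1 / (s + 2)) * (f a * g a + f b * g b) +
        (1 / ((s + 1) * (s + 2))) * (f a * g b + f b * g a) := by
  obtain ⟨hs0, hs1⟩ := hs
  have hba : 0 < b - a := by linarith
  have haI : a ∈ Set.Icc a b := ⟨le_refl a, hab.le⟩
  have hbI : b ∈ Set.Icc a b := ⟨hab.le, le_refl b⟩
  -- g is nonneg on [a,b]
  have hg0 : ∀ x ∈ Set.Icc a b, 0 ≤ g x := by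
    intro x hx
    have h2 := hgs x hx x hx (1/2) ⟨by norm_num, by norm_num⟩
    have hxx : (1/2 : ℝ) * x + (1 - 1/2) * x = x := by ring
    rw [hxx] at h2
    have hhalf : (1/2 : ℝ) < (1/2 : ℝ) ^ s := by
      have := Real.rpow_lt_rpow_of_exponent_gt (x := (1/2:ℝ)) (by norm_num) (by norm_num) hs1
      rwa [Real.rpow_one] at this
    nlinarith [h2, hhalf]
  -- the comparison function
  set ψ : ℝ → ℝ := fun t =>
    (t * f a + (1 - t) * f b) * (t ^ s * g a + (1 - t) ^ s * g b) with hψ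
  have hψcont : Continuous ψ := by
    apply Continuous.mul
    · fun_prop
    · apply Continuous.add
      · exact ((Real.continuous_rpow_const hs0.le).mul continuous_const)
      · exact (((Real.continuous_rpow_const hs0.le).comp
          (continuous_const.sub continuous_id)).mul continuous_const)
  -- pointwise bound
  have hpt : ∀ x ∈ Set.Icc a b, f x * g x ≤ ψ ((b - x) / (b - a)) := by
    intro x hx
    have ht0 : 0 ≤ (b - x) / (b - a) := div_nonneg (by linarith [hx.2]) hba.le
    have ht1 : (b - x) / (b - a) ≤ 1 := by
      rw [div_le_one hba]; linarith [hx.1]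
    have hxeq : ((b - x) / (b - a)) * a + (1 - (b - x) / (b - a)) * b = x := by
      field_simp
      ring
    have hfx : f x ≤ ((b - x) / (b - a)) * f a + (1 - (b - x) / (b - a)) * f b := by
      have h := hf.2 haI hbI ht0
        (show (0:ℝ) ≤ 1 - (b - x) / (b - a) by linarith)
        (show (b - x) / (b - a) + (1 - (b - x) / (b - a)) = 1 by ring)
      simp only [smul_eq_mul] at h
      rwa [hxeq] at h
    have hgx : g x ≤ ((b - x) / (b - a)) ^ s * g a
        + (1 - (b - x) / (b - a)) ^ s * g b := by
      have h := hgs a haI b hbI ((b - x) / (b - a)) ⟨ht0, ht1⟩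
      rwa [hxeq] at h
    have hA : 0 ≤ ((b - x) / (b - a)) * f a + (1 - (b - x) / (b - a)) * f b := by
      have h1 := hf0 a haI; have h2 := hf0 b hbI
      nlinarith
    exact mul_le_mul hfx hgx (hg0 x hx) hA
  -- integral comparison
  have hψint : IntervalIntegrable (fun x => ψ ((b - x) / (b - a))) volume a b := by
    apply Continuous.intervalIntegrable
    exact hψcont.comp (by fun_prop)
  have hint1 : ∫ x in a..b, f x * g x ≤ ∫ x in a..b, ψ ((b - x) / (b - a)) := by
    apply intervalIntegral.integral_mono_on hab.le hfg hψint
    exact hpt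
  -- change of variables
  have hCOV : ∫ x in a..b, ψ ((b - x) / (b - a)) = (b - a) * ∫ t in (0:ℝ)..1, ψ t := by
    have h1 : ∀ x : ℝ, (b - x) / (b - a) = (-(b - a)⁻¹) * x + b / (b - a) := by
      intro x; field_simp; ring
    simp_rw [h1]
    rw [intervalIntegral.integral_comp_mul_add ψ
      (neg_ne_zero.mpr (inv_ne_zero hba.ne')) (b / (b - a))]
    have h2 : -(b - a)⁻¹ * a + b / (b - a) = 1 := by field_simp; ring
    have h3 : -(b - a)⁻¹ * b + b / (b - a) = 0 := by field_simp; ring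
    rw [h2, h3, intervalIntegral.integral_symm]
    simp only [smul_eq_mul]
    have h4 : (-(b - a)⁻¹)⁻¹ = -(b - a) := by
      rw [inv_neg, inv_inv]
    rw [h4]; ring
  -- compute ∫_0^1 ψ
  have hEq : Set.EqOn ψ (fun t =>
      f b * g a * t ^ s + (f a * g a - f b * g a) * t ^ (s + 1)
      + f a * g b * (1 - t) ^ s + (f b * g b - f a * g b) * (1 - t) ^ (s + 1))
      (Set.uIcc (0:ℝ) 1) := by
    intro t ht
    rw [Set.uIcc_of_le (by norm_num)] at ht
    have ht0 : 0 ≤ t := ht.1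
    have ht1 : 0 ≤ 1 - t := by linarith [ht.2]
    have e1 := mul_rpow_self ht0 hs0
    have e2 := mul_rpow_self ht1 hs0
    simp only [hψ]
    linear_combination (f a * g a - f b * g a) * e1 + (f b * g b - f a * g b) * e2
  have hi1 : IntervalIntegrable (fun t : ℝ => f b * g a * t ^ s) volume 0 1 :=
    (Continuous.intervalIntegrable (by exact continuous_const.mul (Real.continuous_rpow_const hs0.le)) _ _)
  have hi2 : IntervalIntegrable (fun t : ℝ => (f a * g a - f b * g a) * t ^ (s+1)) volume 0 1 :=
    (Continuous.intervalIntegrable (by exact continuous_const.mul (Real.continuous_rpow_const (by linarith))) _ _)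
  have hi3 : IntervalIntegrable (fun t : ℝ => f a * g b * (1 - t) ^ s) volume 0 1 :=
    (Continuous.intervalIntegrable (by exact continuous_const.mul ((Real.continuous_rpow_const hs0.le).comp (continuous_const.sub continuous_id))) _ _)
  have hi4 : IntervalIntegrable (fun t : ℝ => (f b * g b - f a * g b) * (1 - t) ^ (s+1)) volume 0 1 :=
    (Continuous.intervalIntegrable (by exact continuous_const.mul ((Real.continuous_rpow_const (by linarith : (0:ℝ) ≤ s + 1)).comp (continuous_const.sub continuous_id))) _ _)
  have hval : ∫ t in (0:ℝ)..1, ψ t =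
      f b * g a * (1/(s+1)) + (f a * g a - f b * g a) * (1/(s+2))
      + f a * g b * (1/(s+1)) + (f b * g b - f a * g b) * (1/(s+2)) := by
    rw [intervalIntegral.integral_congr hEq]
    rw [intervalIntegral.integral_add (by exact (hi1.add hi2).add hi3) hi4,
        intervalIntegral.integral_add (by exact hi1.add hi2) hi3,
        intervalIntegral.integral_add hi1 hi2]
    rw [intervalIntegral.integral_const_mul, intervalIntegral.integral_const_mul,
        intervalIntegral.integral_const_mul, intervalIntegral.integral_const_mul]
    rw [integral_rpow01 hs0, integral_rpow01 (by linarith : (0:ℝ) < s + 1),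
        integral_one_sub_rpow01 hs0, integral_one_sub_rpow01 (by linarith : (0:ℝ) < s + 1)]
    ring_nf
  -- assemble
  have key : ∫ x in a..b, f x * g x ≤ (b - a) *
      (f b * g a * (1/(s+1)) + (f a * g a - f b * g a) * (1/(s+2))
      + f a * g b * (1/(s+1)) + (f b * g b - f a * g b) * (1/(s+2))) := by
    calc ∫ x in a..b, f x * g x ≤ ∫ x in a..b, ψ ((b - x) / (b - a)) := hint1
    _ = (b - a) * ∫ t in (0:ℝ)..1, ψ t := hCOV
    _ = _ := by rw [hval]
  rw [div_mul_eq_mul_div, one_mul, div_le_iff₀ hba]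
  have hs1' : (0:ℝ) < s + 1 := by linarith
  have hs2' : (0:ℝ) < s + 2 := by linarith
  calc ∫ x in a..b, f x * g x ≤ _ := key
  _ = ((1 / (s + 2)) * (f a * g a + f b * g b) +
        (1 / ((s + 1) * (s + 2))) * (f a * g b + f b * g a)) * (b - a) := by
    field_simp
    ring
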